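/- The inverse of a primitive gate is primitive: if V is a unitary on ℂᵈ ⊗ ℂᵈ mapping every decomposable tensor to a decomposable tensor, then V⁻¹ also maps every decomposable tensor to a decomposable tensor. -/

import Mathlib

open Matrix Kronecker Complex

/-- The tensor (Kronecker) product of two vectors of `ℂᵈ`, as a vector of `ℂᵈ ⊗ ℂᵈ`. -/
def tensorVec {d : ℕ} (x y : Fin d → ℂ) : Fin d × Fin d → ℂ := fun p => x p.1 * y p.2

/-- A vector of `ℂᵈ ⊗ ℂᵈ` is decomposable if it is a tensor product of two vectors. -/
def Decomposable {d : ℕ} (z : Fin d × Fin d → ℂ) : Prop := ∃ u v : Fin d → ℂ, z = tensorVec u v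

/-- A gate on `ℂᵈ ⊗ ℂᵈ` is primitive if it maps decomposable tensors to decomposable tensors. -/
def Primitive {d : ℕ} (V : Matrix (Fin d × Fin d) (Fin d × Fin d) ℂ) : Prop :=
  ∀ x y : Fin d → ℂ, Decomposable (V.mulVec (tensorVec x y))

namespace Stmt8Aux
variable {d : ℕ}

/-- Two vectors are parallel (proportional). -/
def par (u v : Fin d → ℂ) : Prop := ∀ i j, u i * v j = u j * v i

lemma par_symm {u v : Fin d → ℂ} (h : par u v) : par v u := fun i j => by
  linear_combination h j i

lemma par_zero_left (v : Fin d → ℂ) : par 0 v := fun i j => by simp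

lemma par_zero_right (u : Fin d → ℂ) : par u 0 := fun i j => by simp

lemma ne_zero_exists {ι : Type*} {u : ι → ℂ} (hu : u ≠ 0) : ∃ i, u i ≠ 0 := by
  by_contra h
  push_neg at h
  exact hu (funext fun i => h i)

lemma par_scale {u v : Fin d → ℂ} (h : par u v) (hu : u ≠ 0) : ∃ c : ℂ, v = c • u := by
  obtain ⟨i₀, h0⟩ := ne_zero_exists hu
  refine ⟨v i₀ / u i₀, funext fun j => ?_⟩
  have hj := h i₀ j
  rw [Pi.smul_apply, smul_eq_mul, div_mul_eq_mul_div, eq_div_iff h0]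
  linear_combination hj

lemma par_of_smul (c c' : ℂ) (u : Fin d → ℂ) : par (c • u) (c' • u) := fun i j => by
  simp only [Pi.smul_apply, smul_eq_mul]; ring

lemma par_trans {m a b : Fin d → ℂ} (h1 : par m a) (h2 : par m b) (hm : m ≠ 0) : par a b := by
  obtain ⟨c, rfl⟩ := par_scale h1 hm
  obtain ⟨c', rfl⟩ := par_scale h2 hm
  exact par_of_smul c c' m

lemma par_sub {u a b : Fin d → ℂ} (h1 : par u a) (h2 : par u b) : par u (a - b) := fun i j => by
  simp only [Pi.sub_apply]
  linear_combination h1 i j - h2 i j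

-- tensorVec basics
lemma tv_add_l (x x' y : Fin d → ℂ) : tensorVec (x + x') y = tensorVec x y + tensorVec x' y := by
  funext p; simp [tensorVec, add_mul]

lemma tv_add_r (x y y' : Fin d → ℂ) : tensorVec x (y + y') = tensorVec x y + tensorVec x y' := by
  funext p; simp [tensorVec, mul_add]

lemma tv_smul_l (c : ℂ) (x y : Fin d → ℂ) : tensorVec (c • x) y = c • tensorVec x y := by
  funext p; simp [tensorVec]; ring

lemma tv_smul_r (c : ℂ) (x y : Fin d → ℂ) : tensorVec x (c • y) = c • tensorVec x y := by
  funext p; simp [tensorVec]; ring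

lemma tv_zero_l (y : Fin d → ℂ) : tensorVec (0 : Fin d → ℂ) y = 0 := by
  funext p; simp [tensorVec]

lemma tv_zero_r (x : Fin d → ℂ) : tensorVec x (0 : Fin d → ℂ) = 0 := by
  funext p; simp [tensorVec]

lemma tv_smul_comm (c : ℂ) (u v : Fin d → ℂ) : tensorVec u (c • v) = tensorVec (c • u) v := by
  rw [tv_smul_r, tv_smul_l]

lemma tv_eq_zero {u v : Fin d → ℂ} (h : tensorVec u v = 0) : u = 0 ∨ v = 0 := by
  by_contra hc
  push_neg at hc
  obtain ⟨i, hi⟩ := ne_zero_exists hc.1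
  obtain ⟨j, hj⟩ := ne_zero_exists hc.2
  have := congrFun h (i, j)
  simp only [tensorVec, Pi.zero_apply] at this
  exact (mul_ne_zero hi hj) this

lemma tv_ne_zero {u v : Fin d → ℂ} (hu : u ≠ 0) (hv : v ≠ 0) : tensorVec u v ≠ 0 := fun h =>
  (tv_eq_zero h).elim hu hv

lemma tensor_factors_par {u v u' v' : Fin d → ℂ} (h : tensorVec u v = tensorVec u' v')
    (hne : tensorVec u v ≠ 0) : par u u' ∧ par v v' := by
  obtain ⟨p, hp⟩ := ne_zero_exists hne
  obtain ⟨i₀, j₀⟩ := p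
  simp only [tensorVec] at hp
  have hu0 : u i₀ ≠ 0 := left_ne_zero_of_mul hp
  have hv0 : v j₀ ≠ 0 := right_ne_zero_of_mul hp
  have hp' : u' i₀ * v' j₀ ≠ 0 := by
    have := congrFun h (i₀, j₀)
    simp only [tensorVec] at this
    rw [← this]; exact hp
  have hu0' : u' i₀ ≠ 0 := left_ne_zero_of_mul hp'
  have hv0' : v' j₀ ≠ 0 := right_ne_zero_of_mul hp'
  constructor
  · intro i k
    have e1 := congrFun h (i, j₀)
    have e2 := congrFun h (k, j₀)
    simp only [tensorVec] at e1 e2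
    have key : (v j₀ * v' j₀) * (u i * u' k - u k * u' i) = 0 := by
      linear_combination (u' k * v' j₀) * e1 - (u' i * v' j₀) * e2
    rcases mul_eq_zero.mp key with h' | h'
    · exact absurd h' (mul_ne_zero hv0 hv0')
    · exact sub_eq_zero.mp h'
  · intro j l
    have e1 := congrFun h (i₀, j)
    have e2 := congrFun h (i₀, l)
    simp only [tensorVec] at e1 e2
    have key : (u i₀ * u' i₀) * (v j * v' l - v l * v' j) = 0 := by
      linear_combination (v' l * u' i₀) * e1 - (v' j * u' i₀) * e2
    rcases mul_eq_zero.mp key with h' | h'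
    · exact absurd h' (mul_ne_zero hu0 hu0')
    · exact sub_eq_zero.mp h'


-- Decomposability via vanishing 2x2 minors
lemma dec_minor {z : Fin d × Fin d → ℂ} (h : Decomposable z) :
    ∀ i j k l, z (i, j) * z (k, l) = z (i, l) * z (k, j) := by
  obtain ⟨u, v, rfl⟩ := h
  intro i j k l
  simp only [tensorVec]
  ring

lemma dec_of_minor {z : Fin d × Fin d → ℂ}
    (h : ∀ i j k l, z (i, j) * z (k, l) = z (i, l) * z (k, j)) : Decomposable z := by
  by_cases h0 : z = 0
  · exact ⟨0, 0, by rw [h0, tv_zero_l]⟩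
  · obtain ⟨p, hp⟩ := ne_zero_exists h0
    obtain ⟨i₀, j₀⟩ := p
    refine ⟨fun i => z (i, j₀), fun j => z (i₀, j) / z (i₀, j₀), funext fun q => ?_⟩
    obtain ⟨i, j⟩ := q
    simp only [tensorVec]
    have := h i j i₀ j₀
    field_simp
    linear_combination this

lemma dec_choose {z : Fin d × Fin d → ℂ} (h : Decomposable z) :
    ∃ u v, z = tensorVec u v ∧ ((u = 0 ∧ v = 0) ∨ (u ≠ 0 ∧ v ≠ 0)) := by
  by_cases h0 : z = 0
  · exact ⟨0, 0, by rw [h0, tv_zero_l], Or.inl ⟨rfl, rfl⟩⟩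
  · obtain ⟨u, v, rfl⟩ := h
    refine ⟨u, v, rfl, Or.inr ⟨?_, ?_⟩⟩
    · rintro rfl; exact h0 (tv_zero_l v)
    · rintro rfl; exact h0 (tv_zero_r u)

/-- Key pair lemma: if a sum of two decomposable tensors is decomposable, then the
left factors are parallel or the right factors are parallel. -/
lemma pair_lemma {u v u' v' : Fin d → ℂ}
    (h : Decomposable (tensorVec u v + tensorVec u' v')) : par u u' ∨ par v v' := by
  by_contra hc
  push_neg at hc
  obtain ⟨hu, hv⟩ := hc
  simp only [par, not_forall] at hu hv
  obtain ⟨i, k, hik⟩ := hu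
  obtain ⟨j, l, hjl⟩ := hv
  have E := dec_minor h i j k l
  simp only [Pi.add_apply, tensorVec] at E
  have key : (u i * u' k - u k * u' i) * (v j * v' l - v l * v' j) = 0 := by
    linear_combination E
  rcases mul_eq_zero.mp key with h' | h'
  · exact hik (sub_eq_zero.mp h')
  · exact hjl (sub_eq_zero.mp h')

-- swap
def swapT (z : Fin d × Fin d → ℂ) : Fin d × Fin d → ℂ := fun p => z (p.2, p.1)

lemma swapT_swapT (z : Fin d × Fin d → ℂ) : swapT (swapT z) = z := rfl

lemma swapT_tv (u v : Fin d → ℂ) : swapT (tensorVec u v) = tensorVec v u := by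
  funext p; simp [swapT, tensorVec, mul_comm]

lemma swapT_add (z w : Fin d × Fin d → ℂ) : swapT (z + w) = swapT z + swapT w := rfl

lemma swapT_smul (c : ℂ) (z : Fin d × Fin d → ℂ) : swapT (c • z) = c • swapT z := rfl

lemma swapT_zero : swapT (0 : Fin d × Fin d → ℂ) = 0 := rfl

lemma swapT_eq_zero {z : Fin d × Fin d → ℂ} (h : swapT z = 0) : z = 0 := by
  rw [← swapT_swapT z, h, swapT_zero]

lemma swapT_dec {z : Fin d × Fin d → ℂ} (h : Decomposable z) : Decomposable (swapT z) := by
  obtain ⟨u, v, rfl⟩ := h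
  exact ⟨v, u, (swapT_tv u v).symm ▸ rfl⟩

-- Pi.single facts
lemma single_ne_zero (i : Fin d) : (Pi.single i 1 : Fin d → ℂ) ≠ 0 := fun h => by
  have := congrFun h i
  simp at this

lemma not_par_single {i0 i1 : Fin d} (h : i0 ≠ i1) :
    ¬ par (Pi.single i0 1 : Fin d → ℂ) (Pi.single i1 1) := by
  intro hp
  have := hp i0 i1
  simp [Pi.single_apply, h, h.symm] at this

lemma exists_not_par {u : Fin d → ℂ} (hu : u ≠ 0) {m : (Fin d → ℂ) → (Fin d → ℂ)}
    (hm : Function.Surjective m) (hd : 2 ≤ d) : ∃ y, ¬ par u (m y) := by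
  by_contra hc
  push_neg at hc
  obtain ⟨y0, hy0⟩ := hm (Pi.single (⟨0, by omega⟩ : Fin d) 1)
  obtain ⟨y1, hy1⟩ := hm (Pi.single (⟨1, by omega⟩ : Fin d) 1)
  have h0 := hc y0
  have h1 := hc y1
  rw [hy0] at h0
  rw [hy1] at h1
  have : par (Pi.single (⟨0, by omega⟩ : Fin d) 1 : Fin d → ℂ)
      (Pi.single (⟨1, by omega⟩ : Fin d) 1) := par_trans h0 h1 hu
  exact not_par_single (by simp [Fin.ext_iff]) this


/-- Extraction: a linear injective map into a fixed-left-factor decomposable family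
is surjective onto that family. -/
lemma extract {u : Fin d → ℂ} (hu : u ≠ 0) (f : (Fin d → ℂ) → (Fin d × Fin d → ℂ))
    (hadd : ∀ x x', f (x + x') = f x + f x')
    (hsmul : ∀ (c : ℂ) x, f (c • x) = c • f x)
    (hinj : ∀ x, f x = 0 → x = 0)
    (hf : ∀ x, ∃ v, f x = tensorVec u v) :
    ∃ e : (Fin d → ℂ) → (Fin d → ℂ),
      (∀ x, f x = tensorVec u (e x)) ∧ (∀ x x', e (x + x') = e x + e x') ∧
        Function.Surjective e := by
  obtain ⟨i₀, hi₀⟩ := ne_zero_exists hu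
  set e : (Fin d → ℂ) → (Fin d → ℂ) := fun x j => f x (i₀, j) * (u i₀)⁻¹ with he
  have key : ∀ x, f x = tensorVec u (e x) := by
    intro x
    obtain ⟨v, hv⟩ := hf x
    have hev : e x = v := by
      funext j
      show f x (i₀, j) * (u i₀)⁻¹ = v j
      rw [hv]
      show u i₀ * v j * (u i₀)⁻¹ = v j
      rw [mul_comm (u i₀) (v j), mul_assoc, mul_inv_cancel₀ hi₀, mul_one]
    rw [hev]; exact hv
  have eadd : ∀ x x', e (x + x') = e x + e x' := by
    intro x x'
    funext j
    simp only [he, hadd, Pi.add_apply]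
    ring
  have esmul : ∀ (c : ℂ) x, e (c • x) = c • e x := by
    intro c x
    funext j
    simp only [he, hsmul, Pi.smul_apply, smul_eq_mul]
    ring
  have einj : Function.Injective e := by
    intro x x' hxx
    have h0 : e (x + (-1 : ℂ) • x') = 0 := by
      rw [eadd, esmul, hxx]
      funext j; simp
    have : f (x + (-1 : ℂ) • x') = 0 := by
      rw [key, h0, tv_zero_r]
    have h := hinj _ this
    rw [neg_one_smul, add_neg_eq_zero] at h
    exact h
  let T : (Fin d → ℂ) →ₗ[ℂ] (Fin d → ℂ) :=
    { toFun := e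
      map_add' := eadd
      map_smul' := esmul }
  have esurj : Function.Surjective e :=
    (LinearMap.injective_iff_surjective (f := T)).mp einj
  exact ⟨e, key, eadd, esurj⟩

/-- Mirrored extraction with fixed right factor. -/
lemma extract' {u : Fin d → ℂ} (hu : u ≠ 0) (f : (Fin d → ℂ) → (Fin d × Fin d → ℂ))
    (hadd : ∀ x x', f (x + x') = f x + f x')
    (hsmul : ∀ (c : ℂ) x, f (c • x) = c • f x)
    (hinj : ∀ x, f x = 0 → x = 0)
    (hf : ∀ x, ∃ v, f x = tensorVec v u) :
    ∃ e : (Fin d → ℂ) → (Fin d → ℂ),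
      (∀ x, f x = tensorVec (e x) u) ∧ (∀ x x', e (x + x') = e x + e x') ∧
        Function.Surjective e := by
  obtain ⟨e, h1, h2, h3⟩ := extract hu (fun x => swapT (f x))
    (fun x x' => show swapT (f (x + x')) = swapT (f x) + swapT (f x') by
      rw [hadd, swapT_add])
    (fun c x => show swapT (f (c • x)) = c • swapT (f x) by rw [hsmul, swapT_smul])
    (fun x hx => hinj x (swapT_eq_zero hx))
    (fun x => by
      obtain ⟨v, hv⟩ := hf x
      exact ⟨v, show swapT (f x) = tensorVec u v by rw [hv, swapT_tv]⟩)
  refine ⟨e, fun x => ?_, h2, h3⟩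
  have h1x : swapT (f x) = tensorVec u (e x) := h1 x
  calc f x = swapT (swapT (f x)) := rfl
    _ = swapT (tensorVec u (e x)) := by rw [h1x]
    _ = tensorVec (e x) u := swapT_tv _ _

/-- Row dichotomy: an additive map with decomposable values has a fixed left factor
or a fixed right factor. -/
lemma rowDich (hd : 0 < d) (G : (Fin d → ℂ) → (Fin d × Fin d → ℂ))
    (hdec : ∀ y, Decomposable (G y))
    (hadd : ∀ y y', G (y + y') = G y + G y') :
    (∃ u, u ≠ 0 ∧ ∀ y, ∃ v, G y = tensorVec u v) ∨
      (∃ v, v ≠ 0 ∧ ∀ y, ∃ u, G y = tensorVec u v) := by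
  choose uf vf hG hnz using fun y => dec_choose (hdec y)
  by_cases hpar : ∀ y y', par (uf y) (uf y')
  · left
    by_cases hz : ∀ y, G y = 0
    · exact ⟨Pi.single ⟨0, hd⟩ 1, single_ne_zero _,
        fun y => ⟨0, by rw [hz y, tv_zero_r]⟩⟩
    · push_neg at hz
      obtain ⟨y₀, hy₀⟩ := hz
      have hu0 : uf y₀ ≠ 0 := by
        rcases hnz y₀ with h | h
        · exact absurd (by rw [hG y₀, h.1, tv_zero_l]) hy₀
        · exact h.1
      refine ⟨uf y₀, hu0, fun y => ?_⟩
      obtain ⟨c, hc⟩ := par_scale (hpar y₀ y) hu0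
      exact ⟨c • vf y, by rw [hG y, hc]; exact (tv_smul_comm _ _ _).symm⟩
  · right
    push_neg at hpar
    obtain ⟨y₁, y₂, hnp⟩ := hpar
    have hu1 : uf y₁ ≠ 0 := fun h => hnp (h ▸ par_zero_left _)
    have hu2 : uf y₂ ≠ 0 := fun h => hnp (h ▸ par_zero_right _)
    have hv1 : vf y₁ ≠ 0 := by
      rcases hnz y₁ with h | h
      · exact absurd h.1 hu1
      · exact h.2
    have hv2 : vf y₂ ≠ 0 := by
      rcases hnz y₂ with h | h
      · exact absurd h.1 hu2
      · exact h.2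
    have hpv : par (vf y₁) (vf y₂) := by
      have hdec12 : Decomposable (tensorVec (uf y₁) (vf y₁) + tensorVec (uf y₂) (vf y₂)) := by
        rw [← hG y₁, ← hG y₂, ← hadd]; exact hdec _
      rcases pair_lemma hdec12 with h | h
      · exact absurd h hnp
      · exact h
    refine ⟨vf y₁, hv1, fun y => ?_⟩
    have hdy1 : Decomposable (tensorVec (uf y) (vf y) + tensorVec (uf y₁) (vf y₁)) := by
      rw [← hG y, ← hG y₁, ← hadd]; exact hdec _
    have hdy2 : Decomposable (tensorVec (uf y) (vf y) + tensorVec (uf y₂) (vf y₂)) := by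
      rw [← hG y, ← hG y₂, ← hadd]; exact hdec _
    rcases pair_lemma hdy1 with h1 | h1
    · rcases pair_lemma hdy2 with h2 | h2
      · -- par (uf y) (uf y₁) and par (uf y) (uf y₂)
        by_cases h0 : uf y = 0
        · have : vf y = 0 := by
            rcases hnz y with h | h
            · exact h.2
            · exact absurd h0 h.1
          exact ⟨0, by rw [hG y, h0, tv_zero_l, tv_zero_l]⟩
        · exact absurd (par_trans h1 h2 h0) hnp
      · -- par (vf y) (vf y₂)
        obtain ⟨c, hc⟩ := par_scale (par_symm h2) hv2
        obtain ⟨c', hc'⟩ := par_scale hpv hv1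
        refine ⟨(c * c') • uf y, ?_⟩
        rw [hG y, hc, hc', smul_smul]
        exact tv_smul_comm _ _ _
    · -- par (vf y) (vf y₁)
      obtain ⟨c, hc⟩ := par_scale (par_symm h1) hv1
      exact ⟨c • uf y, by rw [hG y, hc, tv_smul_comm]⟩


/-- A bilinear map with decomposable values and nondegenerate. -/
structure Good (d : ℕ) where
  Φ : (Fin d → ℂ) → (Fin d → ℂ) → (Fin d × Fin d → ℂ)
  addl : ∀ x x' y, Φ (x + x') y = Φ x y + Φ x' y
  addr : ∀ x y y', Φ x (y + y') = Φ x y + Φ x y'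
  smull : ∀ (c : ℂ) x y, Φ (c • x) y = c • Φ x y
  smulr : ∀ (c : ℂ) x y, Φ x (c • y) = c • Φ x y
  dec : ∀ x y, Decomposable (Φ x y)
  nondeg : ∀ x y, Φ x y = 0 → x = 0 ∨ y = 0

namespace Good

variable (G : Good d)

lemma zero_l (y : Fin d → ℂ) : G.Φ 0 y = 0 := by
  have h := G.addl 0 0 y
  rw [add_zero] at h
  have := congrArg (fun z => z - G.Φ 0 y) h
  simpa using this.symm

lemma zero_r (x : Fin d → ℂ) : G.Φ x 0 = 0 := by
  have h := G.addr x 0 0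
  rw [add_zero] at h
  have := congrArg (fun z => z - G.Φ x 0) h
  simpa using this.symm

lemma ne_zero {x y : Fin d → ℂ} (hx : x ≠ 0) (hy : y ≠ 0) : G.Φ x y ≠ 0 := fun h =>
  (G.nondeg x y h).elim hx hy

/-- The swapped bilinear map. -/
def swap : Good d where
  Φ := fun x y => swapT (G.Φ x y)
  addl := fun x x' y =>
    show swapT (G.Φ (x + x') y) = swapT (G.Φ x y) + swapT (G.Φ x' y) by
      rw [G.addl, swapT_add]
  addr := fun x y y' =>
    show swapT (G.Φ x (y + y')) = swapT (G.Φ x y) + swapT (G.Φ x y') by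
      rw [G.addr, swapT_add]
  smull := fun c x y =>
    show swapT (G.Φ (c • x) y) = c • swapT (G.Φ x y) by rw [G.smull, swapT_smul]
  smulr := fun c x y =>
    show swapT (G.Φ x (c • y)) = c • swapT (G.Φ x y) by rw [G.smulr, swapT_smul]
  dec := fun x y => swapT_dec (G.dec x y)
  nondeg := fun x y h => G.nondeg x y (swapT_eq_zero h)

end Good

/-- No mixed rows: a fixed-left row and a fixed-right row cannot coexist. -/
lemma no_mixed (G : Good d) (hd : 2 ≤ d) {xL xR uL vR : Fin d → ℂ}
    (hxL : xL ≠ 0) (hxR : xR ≠ 0) (huL : uL ≠ 0) (hvR : vR ≠ 0)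
    (hL : ∀ y, ∃ v, G.Φ xL y = tensorVec uL v)
    (hR : ∀ y, ∃ u, G.Φ xR y = tensorVec u vR) : False := by
  obtain ⟨vmap, hvmap, hvadd, hvsurj⟩ := extract huL (fun y => G.Φ xL y)
    (fun y y' => G.addr xL y y') (fun c y => G.smulr c xL y)
    (fun y h => ((G.nondeg xL y h).resolve_left hxL)) hL
  obtain ⟨mmap, hmmap, hmadd, hmsurj⟩ := extract' hvR (fun y => G.Φ xR y)
    (fun y y' => G.addr xR y y') (fun c y => G.smulr c xR y)
    (fun y h => ((G.nondeg xR y h).resolve_left hxR)) hR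
  -- for every y, par uL (mmap y) or par vR (vmap y)
  have step : ∀ y, par uL (mmap y) ∨ par vR (vmap y) := by
    intro y
    have hdecsum : Decomposable (tensorVec uL (vmap y) + tensorVec (mmap y) vR) := by
      rw [← hvmap y, ← hmmap y, ← G.addl]
      exact G.dec _ _
    rcases pair_lemma hdecsum with h | h
    · exact Or.inl h
    · exact Or.inr (par_symm h)
  obtain ⟨y₁, hy₁⟩ := exists_not_par huL hmsurj hd
  obtain ⟨y₂, hy₂⟩ := exists_not_par hvR hvsurj hd
  have h1 : par vR (vmap y₁) := (step y₁).resolve_left hy₁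
  have h2 : par uL (mmap y₂) := (step y₂).resolve_right hy₂
  rcases step (y₁ + y₂) with h3 | h3
  · -- par uL (mmap (y₁+y₂)); subtract mmap y₂ to get par uL (mmap y₁): contradiction
    have : par uL (mmap y₁) := by
      have := par_sub h3 h2
      rw [hmadd y₁ y₂] at this
      simpa using this
    exact hy₁ this
  · have : par vR (vmap y₂) := by
      have := par_sub h3 h1
      rw [hvadd y₁ y₂] at this
      simpa using this
    exact hy₂ this

/-- Case 1: two fixed-left rows with non-parallel left factors give surjectivity. -/
lemma case1 (G : Good d) (hd : 2 ≤ d) {x₁ x₂ u₁ u₂ : Fin d → ℂ}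
    (hx₁ : x₁ ≠ 0) (hx₂ : x₂ ≠ 0)
    (h1 : ∀ y, ∃ v, G.Φ x₁ y = tensorVec u₁ v)
    (h2 : ∀ y, ∃ v, G.Φ x₂ y = tensorVec u₂ v)
    (hnp : ¬ par u₁ u₂) {a b : Fin d → ℂ} (ha : a ≠ 0) (hb : b ≠ 0) :
    ∃ x y, G.Φ x y = tensorVec a b := by
  have hu₁ : u₁ ≠ 0 := fun h => hnp (h ▸ par_zero_left _)
  have hu₂ : u₂ ≠ 0 := fun h => hnp (h ▸ par_zero_right _)
  -- extraction on row x₁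
  obtain ⟨e₁, he₁, _, hs₁⟩ := extract hu₁ (fun y => G.Φ x₁ y)
    (fun y y' => G.addr x₁ y y') (fun c y => G.smulr c x₁ y)
    (fun y h => ((G.nondeg x₁ y h).resolve_left hx₁)) h1
  obtain ⟨y_b, hy_b⟩ := hs₁ b
  have hΦ1b : G.Φ x₁ y_b = tensorVec u₁ b := by rw [he₁ y_b, hy_b]
  have hyb0 : y_b ≠ 0 := by
    rintro rfl
    rw [G.zero_r] at hΦ1b
    exact (tv_ne_zero hu₁ hb) hΦ1b.symm
  -- row x₂ at y_b
  obtain ⟨v₂b, hv₂b⟩ := h2 y_b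
  have hΦ2b : G.Φ x₂ y_b ≠ 0 := G.ne_zero hx₂ hyb0
  have hv₂b0 : v₂b ≠ 0 := by
    rintro rfl
    rw [tv_zero_r] at hv₂b
    exact hΦ2b hv₂b
  have hpar2 : par b v₂b := by
    have hdecsum : Decomposable (tensorVec u₁ b + tensorVec u₂ v₂b) := by
      rw [← hΦ1b, ← hv₂b, ← G.addl]
      exact G.dec _ _
    rcases pair_lemma hdecsum with h | h
    · exact absurd h hnp
    · exact h
  -- Claim: every Φ x y_b has right factor b
  have claim : ∀ x, ∃ u, G.Φ x y_b = tensorVec u b := by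
    intro x
    obtain ⟨up, vp, hp, hnzp⟩ := dec_choose (G.dec x y_b)
    rcases hnzp with ⟨h0u, h0v⟩ | ⟨h0u, h0v⟩
    · exact ⟨0, by rw [hp, h0u, tv_zero_l, tv_zero_l]⟩
    · have hd1 : Decomposable (tensorVec up vp + tensorVec u₁ b) := by
        rw [← hp, ← hΦ1b, ← G.addl]; exact G.dec _ _
      have hd2 : Decomposable (tensorVec up vp + tensorVec u₂ v₂b) := by
        rw [← hp, ← hv₂b, ← G.addl]; exact G.dec _ _
      rcases pair_lemma hd1 with hA | hA
      · rcases pair_lemma hd2 with hB | hB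
        · exact absurd (par_trans hA hB h0u) hnp
        · -- par vp v₂b ; and par b v₂b ⇒ par vp b... then vp = c • b
          have hpvb : par b vp := par_trans (par_symm hpar2) (par_symm hB) hv₂b0
          obtain ⟨c, hc⟩ := par_scale hpvb hb
          exact ⟨c • up, by rw [hp, hc, tv_smul_comm]⟩
      · obtain ⟨c, hc⟩ := par_scale (par_symm hA) hb
        exact ⟨c • up, by rw [hp, hc, tv_smul_comm]⟩
  -- extraction on column y_b
  obtain ⟨e₂, he₂, _, hs₂⟩ := extract' hb (fun x => G.Φ x y_b)
    (fun x x' => G.addl x x' y_b) (fun c x => G.smull c x y_b)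
    (fun x h => ((G.nondeg x y_b h).resolve_right hyb0)) claim
  obtain ⟨x_a, hx_a⟩ := hs₂ a
  exact ⟨x_a, y_b, by rw [he₂ x_a, hx_a]⟩


/-- Main surjectivity lemma. -/
lemma main (G : Good d) (hd : 2 ≤ d)
    (hngl : ∀ u : Fin d → ℂ, u ≠ 0 → ¬ (∀ x y, ∃ v, G.Φ x y = tensorVec u v))
    (hngr : ∀ v : Fin d → ℂ, v ≠ 0 → ¬ (∀ x y, ∃ u, G.Φ x y = tensorVec u v)) :
    ∀ a b : Fin d → ℂ, ∃ x y, G.Φ x y = tensorVec a b := by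
  have hd0 : 0 < d := by omega
  intro a b
  by_cases ha : a = 0
  · exact ⟨0, 0, by rw [G.zero_l, ha, tv_zero_l]⟩
  by_cases hb : b = 0
  · exact ⟨0, 0, by rw [G.zero_l, hb, tv_zero_r]⟩
  by_cases hR : ∃ x, x ≠ 0 ∧ ∃ v, v ≠ 0 ∧ ∀ y, ∃ u, G.Φ x y = tensorVec u v
  · -- every row has a fixed right factor
    obtain ⟨xR, hxR, vR, hvR, hRrow⟩ := hR
    have hallR : ∀ x, ∃ v, v ≠ 0 ∧ ∀ y, ∃ u, G.Φ x y = tensorVec u v := by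
      intro x
      by_cases hx : x = 0
      · exact ⟨Pi.single ⟨0, hd0⟩ 1, single_ne_zero _,
          fun y => ⟨0, by rw [hx, G.zero_l, tv_zero_l]⟩⟩
      · rcases rowDich hd0 (G.Φ x) (G.dec x) (G.addr x) with ⟨u, hu, hL⟩ | h
        · exact absurd (no_mixed G hd hx hxR hu hvR hL hRrow) not_false
        · exact h
    choose vf hvf0 hvf using hallR
    by_cases H2 : ∃ x₁, x₁ ≠ 0 ∧ ∃ x₂, x₂ ≠ 0 ∧ ¬ par (vf x₁) (vf x₂)
    · obtain ⟨x₁, hx₁, x₂, hx₂, hnp⟩ := H2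
      have row1 : ∀ y, ∃ w, (G.swap).Φ x₁ y = tensorVec (vf x₁) w := by
        intro y
        obtain ⟨u, hu⟩ := hvf x₁ y
        exact ⟨u, show swapT (G.Φ x₁ y) = tensorVec (vf x₁) u by rw [hu, swapT_tv]⟩
      have row2 : ∀ y, ∃ w, (G.swap).Φ x₂ y = tensorVec (vf x₂) w := by
        intro y
        obtain ⟨u, hu⟩ := hvf x₂ y
        exact ⟨u, show swapT (G.Φ x₂ y) = tensorVec (vf x₂) u by rw [hu, swapT_tv]⟩
      obtain ⟨x, y, hxy⟩ := case1 (G.swap) hd hx₁ hx₂ row1 row2 hnp hb ha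
      refine ⟨x, y, ?_⟩
      have hxy' : swapT (G.Φ x y) = tensorVec b a := hxy
      calc G.Φ x y = swapT (swapT (G.Φ x y)) := rfl
        _ = swapT (tensorVec b a) := by rw [hxy']
        _ = tensorVec a b := swapT_tv _ _
    · push_neg at H2
      exfalso
      apply hngr (vf xR) (hvf0 xR)
      intro x y
      by_cases hx : x = 0
      · exact ⟨0, by rw [hx, G.zero_l, tv_zero_l]⟩
      · obtain ⟨c, hc⟩ := par_scale (H2 xR hxR x hx) (hvf0 xR)
        obtain ⟨u, hu⟩ := hvf x y
        exact ⟨c • u, by rw [hu, hc, tv_smul_comm]⟩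
  · -- every row has a fixed left factor
    have hallL : ∀ x, ∃ u, u ≠ 0 ∧ ∀ y, ∃ v, G.Φ x y = tensorVec u v := by
      intro x
      by_cases hx : x = 0
      · exact ⟨Pi.single ⟨0, hd0⟩ 1, single_ne_zero _,
          fun y => ⟨0, by rw [hx, G.zero_l, tv_zero_r]⟩⟩
      · rcases rowDich hd0 (G.Φ x) (G.dec x) (G.addr x) with h | ⟨v, hv, hRx⟩
        · exact h
        · exact absurd ⟨x, hx, v, hv, hRx⟩ hR
    choose uf huf0 huf using hallL
    by_cases H1 : ∃ x₁, x₁ ≠ 0 ∧ ∃ x₂, x₂ ≠ 0 ∧ ¬ par (uf x₁) (uf x₂)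
    · obtain ⟨x₁, hx₁, x₂, hx₂, hnp⟩ := H1
      exact case1 G hd hx₁ hx₂ (huf x₁) (huf x₂) hnp ha hb
    · push_neg at H1
      exfalso
      set x₀ : Fin d → ℂ := Pi.single ⟨0, hd0⟩ 1 with hx₀
      have hx₀0 : x₀ ≠ 0 := single_ne_zero _
      apply hngl (uf x₀) (huf0 x₀)
      intro x y
      by_cases hx : x = 0
      · exact ⟨0, by rw [hx, G.zero_l, tv_zero_r]⟩
      · obtain ⟨c, hc⟩ := par_scale (H1 x₀ hx₀0 x hx) (huf0 x₀)
        obtain ⟨v, hv⟩ := huf x y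
        exact ⟨c • v, by rw [hv, hc]; exact (tv_smul_comm _ _ _).symm⟩


lemma tv_sum_r (u : Fin d → ℂ) (v : Fin d → (Fin d → ℂ)) :
    ∑ s, tensorVec u (v s) = tensorVec u (∑ s, v s) := by
  funext p
  rw [Finset.sum_apply]
  simp only [tensorVec, Finset.sum_apply, Finset.mul_sum]

lemma tv_sum_l (v : Fin d → ℂ) (u : Fin d → (Fin d → ℂ)) :
    ∑ s, tensorVec (u s) v = tensorVec (∑ s, u s) v := by
  funext p
  rw [Finset.sum_apply]
  simp only [tensorVec, Finset.sum_apply, Finset.sum_mul]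

lemma tensor_expand (z : Fin d × Fin d → ℂ) :
    ∑ s, tensorVec (Pi.single s 1) (fun j => z (s, j)) = z := by
  funext p
  rw [Finset.sum_apply]
  simp only [tensorVec, Pi.single_apply, ite_mul, one_mul, zero_mul]
  rw [Finset.sum_ite_eq Finset.univ p.1 (fun s => z (s, p.2))]
  simp

lemma notdec_diag {i0 i1 : Fin d} (h : i0 ≠ i1) :
    ¬ Decomposable (fun p => if p = (i0, i0) ∨ p = (i1, i1) then (1 : ℂ) else 0) := by
  rintro ⟨u, v, hw⟩
  have h00 : u i0 * v i0 = 1 := by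
    have := congrFun hw (i0, i0)
    simpa [tensorVec] using this.symm
  have h11 : u i1 * v i1 = 1 := by
    have := congrFun hw (i1, i1)
    simpa [tensorVec] using this.symm
  have h01 : u i0 * v i1 = 0 := by
    have := congrFun hw (i0, i1)
    simp only [tensorVec] at this
    rw [if_neg] at this
    · exact this.symm
    · rintro (h' | h')
      · exact h (by simpa using (congrArg Prod.snd h').symm)
      · exact h (by simpa using congrArg Prod.fst h')
  rcases mul_eq_zero.mp h01 with h' | h'
  · rw [h', zero_mul] at h00; exact one_ne_zero h00.symm
  · rw [h', mul_zero] at h11; exact one_ne_zero h11.symm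

end Stmt8Aux


open Stmt8Aux in
/-- The inverse of a primitive unitary gate is primitive. -/
theorem stmt8 {d : ℕ} (V : Matrix (Fin d × Fin d) (Fin d × Fin d) ℂ)
    (hV : V ∈ Matrix.unitaryGroup (Fin d × Fin d) ℂ) (h : Primitive V) :
    Primitive V⁻¹ := by
  intro a b
  by_cases hd2 : d < 2
  · -- when d ≤ 1 everything is decomposable
    apply dec_of_minor
    intro i j k l
    have hik : i = k := Fin.ext (by omega)
    have hjl : j = l := Fin.ext (by omega)
    rw [hik, hjl]
  push_neg at hd2
  obtain ⟨hV1, hV2⟩ := Unitary.mem_iff.mp hV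
  have hinv : V⁻¹ = star V := Matrix.inv_eq_left_inv hV1
  have hVV : V * V⁻¹ = 1 := by rw [hinv]; exact hV2
  have hVV' : V⁻¹ * V = 1 := by rw [hinv]; exact hV1
  have hcancel : ∀ z, V⁻¹.mulVec (V.mulVec z) = z := fun z => by
    rw [Matrix.mulVec_mulVec, hVV', Matrix.one_mulVec]
  have hcancel' : ∀ z, V.mulVec (V⁻¹.mulVec z) = z := fun z => by
    rw [Matrix.mulVec_mulVec, hVV, Matrix.one_mulVec]
  set G : Good d :=
    { Φ := fun x y => V.mulVec (tensorVec x y)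
      addl := fun x x' y =>
        show V.mulVec (tensorVec (x + x') y) = _ + _ by rw [tv_add_l, Matrix.mulVec_add]
      addr := fun x y y' =>
        show V.mulVec (tensorVec x (y + y')) = _ + _ by rw [tv_add_r, Matrix.mulVec_add]
      smull := fun c x y =>
        show V.mulVec (tensorVec (c • x) y) = c • V.mulVec (tensorVec x y) by
          rw [tv_smul_l, Matrix.mulVec_smul]
      smulr := fun c x y =>
        show V.mulVec (tensorVec x (c • y)) = c • V.mulVec (tensorVec x y) by
          rw [tv_smul_r, Matrix.mulVec_smul]
      dec := fun x y => h x y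
      nondeg := fun x y hxy => by
        have hxy' : V.mulVec (tensorVec x y) = 0 := hxy
        have : tensorVec x y = 0 := by
          rw [← hcancel (tensorVec x y), hxy', Matrix.mulVec_zero]
        exact tv_eq_zero this } with hG
  have hGapp : ∀ x y, G.Φ x y = V.mulVec (tensorVec x y) := fun x y => rfl
  -- the bad non-decomposable vector
  set i0 : Fin d := ⟨0, by omega⟩ with hi0
  set i1 : Fin d := ⟨1, by omega⟩ with hi1
  have hi01 : i0 ≠ i1 := by simp [hi0, hi1, Fin.ext_iff]
  set w : Fin d × Fin d → ℂ := fun p => if p = (i0, i0) ∨ p = (i1, i1) then 1 else 0 with hw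
  have hwnd : ¬ Decomposable w := notdec_diag hi01
  set z : Fin d × Fin d → ℂ := V⁻¹.mulVec w with hz
  have hwz : V.mulVec z = w := hcancel' w
  have hzsum : w = ∑ s, V.mulVec (tensorVec (Pi.single s 1) (fun j => z (s, j))) := by
    conv_lhs => rw [← hwz, ← tensor_expand z]
    rw [show (∑ s, V.mulVec (tensorVec (Pi.single s 1) fun j => z (s, j))) =
        ∑ s, V.mulVecLin (tensorVec (Pi.single s 1) fun j => z (s, j)) from rfl]
    rw [← map_sum]
    rfl
  have hngl : ∀ u : Fin d → ℂ, u ≠ 0 → ¬ (∀ x y, ∃ v, G.Φ x y = tensorVec u v) := by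
    intro u hu H
    apply hwnd
    choose vs hvs using fun s => H (Pi.single s 1) (fun j => z (s, j))
    refine ⟨u, ∑ s, vs s, ?_⟩
    rw [hzsum, ← tv_sum_r]
    exact Finset.sum_congr rfl fun s _ => hvs s
  have hngr : ∀ v : Fin d → ℂ, v ≠ 0 → ¬ (∀ x y, ∃ u, G.Φ x y = tensorVec u v) := by
    intro v hv H
    apply hwnd
    choose us hus using fun s => H (Pi.single s 1) (fun j => z (s, j))
    refine ⟨∑ s, us s, v, ?_⟩
    rw [hzsum, ← tv_sum_l]
    exact Finset.sum_congr rfl fun s _ => hus s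
  obtain ⟨x, y, hxy⟩ := main G hd2 hngl hngr a b
  refine ⟨x, y, ?_⟩
  rw [← hxy, hGapp, hcancel]
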